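/- Let (x*,y*) ∈ ℝⁿ×ℝᵐ be a point around which f, h, g are twice continuously differentiable, and let (μ*,λ*) be such that the Jacobian uniqueness conditions of (P_{x*}) are satisfied at (y*,μ*,λ*). Let (y(·),μ(·),λ(·)) be the implicit mapping from the implicit-function lemma, with (y(x*),μ(x*),λ(x*)) = (y*,μ*,λ*). Then the matrix K_α(x*) is nonsingular, and there exists δ₀>0 such that K_α(x) is nonsingular for every x ∈ B_{δ₀}(x*). -/

import Mathlib

open Matrix
open scoped Classical

noncomputable section

/-- Vectors in `ℝ^n`. -/
abbrev Vec (n : ℕ) : Type := Fin n → ℝ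

/-- Gradient of a scalar function on `ℝ^n`. -/
def grad {n : ℕ} (φ : Vec n → ℝ) (x : Vec n) : Vec n :=
  fun i => fderiv ℝ φ x (Pi.single i 1)

/-- Hessian matrix of a scalar function on `ℝ^n`. -/
def hess {n : ℕ} (φ : Vec n → ℝ) (x : Vec n) : Matrix (Fin n) (Fin n) ℝ :=
  fun i j => fderiv ℝ (fun z => fderiv ℝ φ z (Pi.single j 1)) x (Pi.single i 1)

/-- Jacobian matrix of a map `ℝ^n → ℝ^k` (rows indexed by components). -/
def jac {n k : ℕ} (F : Vec n → Vec k) (x : Vec n) : Matrix (Fin k) (Fin n) ℝ :=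
  fun j i => fderiv ℝ (fun z => F z j) x (Pi.single i 1)

/-- Lagrangian `L(x,y,μ,λ) = f(x,y) + μᵀh(x,y) − λᵀg(x,y)` of the inner problem `(P_x)`. -/
def Lag {n m m₁ m₂ : ℕ} (f : Vec n → Vec m → ℝ) (h : Vec n → Vec m → Vec m₁)
    (g : Vec n → Vec m → Vec m₂) (x : Vec n) (y : Vec m) (μ : Vec m₁) (lam : Vec m₂) : ℝ :=
  f x y + ∑ j, μ j * h x y j - ∑ i, lam i * g x y i

/-- `∇_y L(x,y,μ,λ)`. -/
def gradY {n m m₁ m₂ : ℕ} (f : Vec n → Vec m → ℝ) (h : Vec n → Vec m → Vec m₁)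
    (g : Vec n → Vec m → Vec m₂) (x : Vec n) (y : Vec m) (μ : Vec m₁) (lam : Vec m₂) : Vec m :=
  grad (fun z => Lag f h g x z μ lam) y

/-- `∇_x L(x,y,μ,λ)`. -/
def gradX {n m m₁ m₂ : ℕ} (f : Vec n → Vec m → ℝ) (h : Vec n → Vec m → Vec m₁)
    (g : Vec n → Vec m → Vec m₂) (x : Vec n) (y : Vec m) (μ : Vec m₁) (lam : Vec m₂) : Vec n :=
  grad (fun x' => Lag f h g x' y μ lam) x

/-- `∇²_{yy} L(x,y,μ,λ)`. -/
def hessYY {n m m₁ m₂ : ℕ} (f : Vec n → Vec m → ℝ) (h : Vec n → Vec m → Vec m₁)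
    (g : Vec n → Vec m → Vec m₂) (x : Vec n) (y : Vec m) (μ : Vec m₁) (lam : Vec m₂) :
    Matrix (Fin m) (Fin m) ℝ :=
  hess (fun z => Lag f h g x z μ lam) y

/-- `∇²_{xx} L(x,y,μ,λ)`. -/
def hessXX {n m m₁ m₂ : ℕ} (f : Vec n → Vec m → ℝ) (h : Vec n → Vec m → Vec m₁)
    (g : Vec n → Vec m → Vec m₂) (x : Vec n) (y : Vec m) (μ : Vec m₁) (lam : Vec m₂) :
    Matrix (Fin n) (Fin n) ℝ :=
  hess (fun x' => Lag f h g x' y μ lam) x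

/-- Mixed second derivative `∇²_{yx} L(x,y,μ,λ)` (an `m × n` matrix, entry `(j,i)` is
`∂²L/∂x_i∂y_j`). -/
def hessYX {n m m₁ m₂ : ℕ} (f : Vec n → Vec m → ℝ) (h : Vec n → Vec m → Vec m₁)
    (g : Vec n → Vec m → Vec m₂) (x : Vec n) (y : Vec m) (μ : Vec m₁) (lam : Vec m₂) :
    Matrix (Fin m) (Fin n) ℝ :=
  fun j i => fderiv ℝ (fun x' => fderiv ℝ (fun z => Lag f h g x' z μ lam) y (Pi.single j 1))
    x (Pi.single i 1)

/-- Feasible set `Φ = {x : H(x)=0, G(x)≤0}` of the outer problem. -/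
def PhiSet {n n₁ n₂ : ℕ} (H : Vec n → Vec n₁) (G : Vec n → Vec n₂) : Set (Vec n) :=
  {x | H x = 0 ∧ ∀ i, G x i ≤ 0}

/-- Feasible set `Y(x) = {y : h(x,y)=0, g(x,y)≤0}` of the inner problem. -/
def Yset {n m m₁ m₂ : ℕ} (h : Vec n → Vec m → Vec m₁) (g : Vec n → Vec m → Vec m₂)
    (x : Vec n) : Set (Vec m) :=
  {y | h x y = 0 ∧ ∀ i, g x y i ≤ 0}

/-- KKT conditions of the inner problem `(P_x)` at `(y,μ,λ)`. -/
def InnerKKT {n m m₁ m₂ : ℕ} (f : Vec n → Vec m → ℝ) (h : Vec n → Vec m → Vec m₁)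
    (g : Vec n → Vec m → Vec m₂) (x : Vec n) (y : Vec m) (μ : Vec m₁) (lam : Vec m₂) : Prop :=
  gradY f h g x y μ lam = 0 ∧ h x y = 0 ∧
    (∀ i, 0 ≤ lam i) ∧ (∀ i, g x y i ≤ 0) ∧ (∀ i, lam i * g x y i = 0)

/-- Linear independence constraint qualification for the inner problem at `(x,y)`:
the gradients of the equality constraints together with those of the active inequality
constraints are linearly independent. -/
def InnerLICQ {n m m₁ m₂ : ℕ} (h : Vec n → Vec m → Vec m₁) (g : Vec n → Vec m → Vec m₂)
    (x : Vec n) (y : Vec m) : Prop :=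
  LinearIndependent ℝ (Sum.elim (fun j : Fin m₁ => grad (fun z => h x z j) y)
    (fun i : {i : Fin m₂ // g x y i = 0} => grad (fun z => g x z i.1) y))

/-- Critical cone `C_x(y)` of the inner problem `(P_x)`. -/
def innerCone {n m m₁ m₂ : ℕ} (f : Vec n → Vec m → ℝ) (h : Vec n → Vec m → Vec m₁)
    (g : Vec n → Vec m → Vec m₂) (x : Vec n) (y : Vec m) : Set (Vec m) :=
  {d | jac (h x) y *ᵥ d = 0 ∧
    (∀ i, g x y i = 0 → grad (fun z => g x z i) y ⬝ᵥ d ≤ 0) ∧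
    grad (f x) y ⬝ᵥ d ≤ 0}

/-- Jacobian uniqueness conditions of the inner problem `(P_x)` at `(y,μ,λ)`:
KKT conditions, LICQ, strict complementarity, and the second-order sufficient
optimality condition. -/
def InnerJU {n m m₁ m₂ : ℕ} (f : Vec n → Vec m → ℝ) (h : Vec n → Vec m → Vec m₁)
    (g : Vec n → Vec m → Vec m₂) (x : Vec n) (y : Vec m) (μ : Vec m₁) (lam : Vec m₂) : Prop :=
  InnerKKT f h g x y μ lam ∧ InnerLICQ h g x y ∧
    (∀ i, 0 < lam i - g x y i) ∧
    (∀ d ∈ innerCone f h g x y, d ≠ 0 → d ⬝ᵥ hessYY f h g x y μ lam *ᵥ d < 0)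

/-- The active index set `α = {i : g_i(x,y) = 0}` of the inner problem. -/
def activeSet {n m m₂ : ℕ} (g : Vec n → Vec m → Vec m₂) (x : Vec n) (y : Vec m) :
    Finset (Fin m₂) :=
  Finset.univ.filter fun i => g x y i = 0

/-- The inner KKT matrix `K_α` with block rows
`[∇²_{yy}L, J_y hᵀ, −J_y g_αᵀ]`, `[J_y h, 0, 0]`, `[−J_y g_α, 0, 0]`. -/
def Kmat {n m m₁ m₂ : ℕ} (f : Vec n → Vec m → ℝ) (h : Vec n → Vec m → Vec m₁)
    (g : Vec n → Vec m → Vec m₂) (α : Finset (Fin m₂)) (x : Vec n) (y : Vec m)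
    (μ : Vec m₁) (lam : Vec m₂) :
    Matrix (Fin m ⊕ (Fin m₁ ⊕ ↥α)) (Fin m ⊕ (Fin m₁ ⊕ ↥α)) ℝ :=
  Matrix.fromBlocks (hessYY f h g x y μ lam)
    (Matrix.fromRows (jac (h x) y)
      (-((jac (g x) y).submatrix (fun a : ↥α => (a : Fin m₂)) id)))ᵀ
    (Matrix.fromRows (jac (h x) y)
      (-((jac (g x) y).submatrix (fun a : ↥α => (a : Fin m₂)) id)))
    0

/-- The matrix `N_α` with block rows `∇²_{yx}L`, `J_x h`, `J_x g_α`. -/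
def Nmat {n m m₁ m₂ : ℕ} (f : Vec n → Vec m → ℝ) (h : Vec n → Vec m → Vec m₁)
    (g : Vec n → Vec m → Vec m₂) (α : Finset (Fin m₂)) (x : Vec n) (y : Vec m)
    (μ : Vec m₁) (lam : Vec m₂) :
    Matrix (Fin m ⊕ (Fin m₁ ⊕ ↥α)) (Fin n) ℝ :=
  Matrix.fromRows (hessYX f h g x y μ lam)
    (Matrix.fromRows (jac (fun x' => h x' y) x)
      ((jac (fun x' => g x' y) x).submatrix (fun a : ↥α => (a : Fin m₂)) id))

/-- The reduced Hessian `Ψ = ∇²_{xx}L − N_αᵀ K_α⁻¹ N_α` (active set taken at `(x,y)`). -/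
def Psi {n m m₁ m₂ : ℕ} (f : Vec n → Vec m → ℝ) (h : Vec n → Vec m → Vec m₁)
    (g : Vec n → Vec m → Vec m₂) (x : Vec n) (y : Vec m) (μ : Vec m₁) (lam : Vec m₂) :
    Matrix (Fin n) (Fin n) ℝ :=
  hessXX f h g x y μ lam -
    (Nmat f h g (activeSet g x y) x y μ lam)ᵀ * (Kmat f h g (activeSet g x y) x y μ lam)⁻¹ *
      Nmat f h g (activeSet g x y) x y μ lam

/-- The multiplier set `Λ(x)` of the outer problem: pairs `(u,v)` with
`∇_x L + JH(x)ᵀu + JG(x)ᵀv = 0`, `H(x)=0`, `0 ≤ v ⊥ G(x) ≤ 0`. -/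
def LambdaSet {n m n₁ n₂ m₁ m₂ : ℕ} (f : Vec n → Vec m → ℝ) (h : Vec n → Vec m → Vec m₁)
    (g : Vec n → Vec m → Vec m₂) (H : Vec n → Vec n₁) (G : Vec n → Vec n₂)
    (x : Vec n) (y : Vec m) (μ : Vec m₁) (lam : Vec m₂) : Set (Vec n₁ × Vec n₂) :=
  {uv | gradX f h g x y μ lam + (jac H x)ᵀ *ᵥ uv.1 + (jac G x)ᵀ *ᵥ uv.2 = 0 ∧
    H x = 0 ∧ (∀ i, 0 ≤ uv.2 i) ∧ (∀ i, G x i ≤ 0) ∧ (∀ i, uv.2 i * G x i = 0)}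

/-- Linear independence constraint qualification for the outer problem at `x`. -/
def OuterLICQ {n n₁ n₂ : ℕ} (H : Vec n → Vec n₁) (G : Vec n → Vec n₂) (x : Vec n) : Prop :=
  LinearIndependent ℝ (Sum.elim (fun j : Fin n₁ => grad (fun x' => H x' j) x)
    (fun i : {i : Fin n₂ // G x i = 0} => grad (fun x' => G x' i.1) x))

/-- The outer critical cone `C(x)`. -/
def upperCone {n m n₁ n₂ m₁ m₂ : ℕ} (f : Vec n → Vec m → ℝ) (h : Vec n → Vec m → Vec m₁)
    (g : Vec n → Vec m → Vec m₂) (H : Vec n → Vec n₁) (G : Vec n → Vec n₂)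
    (x : Vec n) (y : Vec m) (μ : Vec m₁) (lam : Vec m₂) : Set (Vec n) :=
  {d | jac H x *ᵥ d = 0 ∧
    (∀ i, G x i = 0 → grad (fun x' => G x' i) x ⬝ᵥ d ≤ 0) ∧
    gradX f h g x y μ lam ⬝ᵥ d ≤ 0}

/-- Quadratic form `⟨[Σ_j u_j ∇²H_j(x) + Σ_i v_i ∇²G_i(x)]d, d⟩`. -/
def upperQuad {n n₁ n₂ : ℕ} (H : Vec n → Vec n₁) (G : Vec n → Vec n₂) (x : Vec n)
    (uv : Vec n₁ × Vec n₂) (d : Vec n) : ℝ :=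
  d ⬝ᵥ ((∑ j, uv.1 j • hess (fun x' => H x' j) x
    + ∑ i, uv.2 i • hess (fun x' => G x' i) x) *ᵥ d)

/-- Second-order sufficient condition term at a direction `d`:
`sup_{(u,v)∈Λ(x)} ⟨[Σ u_j∇²H_j + Σ v_i∇²G_i]d,d⟩ + ⟨[∇²_{xx}L − N_αᵀK_α⁻¹N_α]d,d⟩`. -/
def secondOrderTerm {n m n₁ n₂ m₁ m₂ : ℕ} (f : Vec n → Vec m → ℝ)
    (h : Vec n → Vec m → Vec m₁) (g : Vec n → Vec m → Vec m₂)
    (H : Vec n → Vec n₁) (G : Vec n → Vec n₂)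
    (x : Vec n) (y : Vec m) (μ : Vec m₁) (lam : Vec m₂) (d : Vec n) : ℝ :=
  sSup ((fun uv => upperQuad H G x uv d) '' LambdaSet f h g H G x y μ lam) +
    d ⬝ᵥ Psi f h g x y μ lam *ᵥ d

/-- Jacobian uniqueness condition of the constrained minimax problem (Definition 3.1):
(i) outer KKT conditions, (ii) outer LICQ, (iii) outer strict complementarity,
(iv) inner Jacobian uniqueness conditions, (v) second-order sufficient condition on the
critical cone `C(x)`. -/
def MinimaxJU {n m n₁ n₂ m₁ m₂ : ℕ} (f : Vec n → Vec m → ℝ) (h : Vec n → Vec m → Vec m₁)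
    (g : Vec n → Vec m → Vec m₂) (H : Vec n → Vec n₁) (G : Vec n → Vec n₂)
    (x : Vec n) (u : Vec n₁) (v : Vec n₂) (y : Vec m) (μ : Vec m₁) (lam : Vec m₂) : Prop :=
  (u, v) ∈ LambdaSet f h g H G x y μ lam ∧
  OuterLICQ H G x ∧
  (∀ i, G x i = 0 → 0 < v i - G x i) ∧
  (y ∈ Yset h g x ∧ InnerJU f h g x y μ lam) ∧
  (∀ d ∈ upperCone f h g H G x y μ lam, d ≠ 0 →
    0 < secondOrderTerm f h g H G x y μ lam d)

/-- Property A of the constrained minimax problem (Definition 4.2): outer KKT, outer LICQ,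
inner Jacobian uniqueness conditions, and the strong second-order sufficient condition on
the affine hull of the critical cone (no outer strict complementarity required). -/
def PropertyA {n m n₁ n₂ m₁ m₂ : ℕ} (f : Vec n → Vec m → ℝ) (h : Vec n → Vec m → Vec m₁)
    (g : Vec n → Vec m → Vec m₂) (H : Vec n → Vec n₁) (G : Vec n → Vec n₂)
    (x : Vec n) (u : Vec n₁) (v : Vec n₂) (y : Vec m) (μ : Vec m₁) (lam : Vec m₂) : Prop :=
  (u, v) ∈ LambdaSet f h g H G x y μ lam ∧
  OuterLICQ H G x ∧
  (y ∈ Yset h g x ∧ InnerJU f h g x y μ lam) ∧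
  (∀ d ∈ (affineSpan ℝ (upperCone f h g H G x y μ lam) : Set (Vec n)), d ≠ 0 →
    0 < secondOrderTerm f h g H G x y μ lam d)

/-- `(x*,y*)` is a local minimax point (Definition 1.1). -/
def LocalMinimax {n m n₁ n₂ m₁ m₂ : ℕ} (f : Vec n → Vec m → ℝ) (h : Vec n → Vec m → Vec m₁)
    (g : Vec n → Vec m → Vec m₂) (H : Vec n → Vec n₁) (G : Vec n → Vec n₂)
    (xs : Vec n) (ys : Vec m) : Prop :=
  ∃ δ₀ > (0:ℝ), ∃ η : ℝ → ℝ, (∀ δ ∈ Set.Ioc 0 δ₀, 0 ≤ η δ) ∧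
    Filter.Tendsto η (nhdsWithin 0 (Set.Ioi 0)) (nhds 0) ∧
    ∀ δ ∈ Set.Ioc (0:ℝ) δ₀, ∀ x ∈ Metric.closedBall xs δ ∩ PhiSet H G,
      ∀ y ∈ Yset h g xs ∩ Metric.closedBall ys δ,
        f xs y ≤ f xs ys ∧
        f xs ys ≤ sSup (f x '' (Yset h g x ∩ Metric.closedBall ys (η δ)))

/-- Componentwise positive part. -/
def vecPos {p : ℕ} (w : Vec p) : Vec p := fun i => max 0 (w i)

/-- Componentwise negative part. -/
def vecNeg {p : ℕ} (w : Vec p) : Vec p := fun i => min 0 (w i)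

/-- The space of the Kojima mapping variables `(x,u,w,y,μ,ξ)`. -/
abbrev ZSpace (n n₁ n₂ m m₁ m₂ : ℕ) : Type :=
  Vec n × Vec n₁ × Vec n₂ × Vec m × Vec m₁ × Vec m₂

/-- The Kojima mapping of the constrained minimax problem. -/
def Kojima {n m n₁ n₂ m₁ m₂ : ℕ} (f : Vec n → Vec m → ℝ) (h : Vec n → Vec m → Vec m₁)
    (g : Vec n → Vec m → Vec m₂) (H : Vec n → Vec n₁) (G : Vec n → Vec n₂) :
    ZSpace n n₁ n₂ m m₁ m₂ → ZSpace n n₁ n₂ m m₁ m₂ :=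
  fun z =>
    (gradX f h g z.1 z.2.2.2.1 z.2.2.2.2.1 (vecPos z.2.2.2.2.2)
        + (jac H z.1)ᵀ *ᵥ z.2.1 + (jac G z.1)ᵀ *ᵥ vecPos z.2.2.1,
     H z.1,
     G z.1 - vecNeg z.2.2.1,
     gradY f h g z.1 z.2.2.2.1 z.2.2.2.2.1 (vecPos z.2.2.2.2.2),
     h z.1 z.2.2.2.1,
     -g z.1 z.2.2.2.1 + vecNeg z.2.2.2.2.2)

/-- Euclidean pairing on `ZSpace`. -/
def pairZ {n n₁ n₂ m m₁ m₂ : ℕ} (a b : ZSpace n n₁ n₂ m m₁ m₂) : ℝ :=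
  a.1 ⬝ᵥ b.1 + a.2.1 ⬝ᵥ b.2.1 + a.2.2.1 ⬝ᵥ b.2.2.1 + a.2.2.2.1 ⬝ᵥ b.2.2.2.1 +
    a.2.2.2.2.1 ⬝ᵥ b.2.2.2.2.1 + a.2.2.2.2.2 ⬝ᵥ b.2.2.2.2.2

/-- The cone `𝓚 = ℝⁿ×ℝ^{n₁}×ℝ₊^{n₂}×ℝᵐ×ℝ^{m₁}×ℝ₊^{m₂}`. -/
def Kcone {n n₁ n₂ m m₁ m₂ : ℕ} : Set (ZSpace n n₁ n₂ m m₁ m₂) :=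
  {z | (∀ i, 0 ≤ z.2.2.1 i) ∧ ∀ i, 0 ≤ z.2.2.2.2.2 i}

/-- Normal cone of a convex set `K` at `z` (w.r.t. the Euclidean pairing);
empty if `z ∉ K`. -/
def normalCone {n n₁ n₂ m m₁ m₂ : ℕ} (K : Set (ZSpace n n₁ n₂ m m₁ m₂))
    (z : ZSpace n n₁ n₂ m m₁ m₂) : Set (ZSpace n n₁ n₂ m m₁ m₂) :=
  {w | z ∈ K ∧ ∀ z' ∈ K, pairZ w (z' - z) ≤ 0}

/-- The map `𝓗(z)` of the generalized-equation formulation of the KKT system. -/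
def Hmap {n m n₁ n₂ m₁ m₂ : ℕ} (f : Vec n → Vec m → ℝ) (h : Vec n → Vec m → Vec m₁)
    (g : Vec n → Vec m → Vec m₂) (H : Vec n → Vec n₁) (G : Vec n → Vec n₂) :
    ZSpace n n₁ n₂ m m₁ m₂ → ZSpace n n₁ n₂ m m₁ m₂ :=
  fun z =>
    (gradX f h g z.1 z.2.2.2.1 z.2.2.2.2.1 z.2.2.2.2.2
        + (jac H z.1)ᵀ *ᵥ z.2.1 + (jac G z.1)ᵀ *ᵥ z.2.2.1,
     H z.1,
     -G z.1,
     gradY f h g z.1 z.2.2.2.1 z.2.2.2.2.1 z.2.2.2.2.2,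
     h z.1 z.2.2.2.1,
     -g z.1 z.2.2.2.1)

/-- `z*` is a strongly regular solution of `0 ∈ Φ(z) + N_K(z)` (Definition 4.1 of
Robinson): for all small `η`, the linearized generalized equation
`η ∈ Φ(z*) + JΦ(z*)(z−z*) + N_K(z)` has a unique solution `ẑ(η)` near `z*`, depending
Lipschitz-continuously on `η`. -/
def StrongRegular {n m n₁ n₂ m₁ m₂ : ℕ} (Φ : ZSpace n n₁ n₂ m m₁ m₂ → ZSpace n n₁ n₂ m m₁ m₂)
    (K : Set (ZSpace n n₁ n₂ m m₁ m₂)) (zs : ZSpace n n₁ n₂ m m₁ m₂) : Prop :=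
  ∃ δ > (0:ℝ), ∃ ε > (0:ℝ), ∃ zhat : ZSpace n n₁ n₂ m m₁ m₂ → ZSpace n n₁ n₂ m m₁ m₂,
    (∀ η ∈ Metric.closedBall (0 : ZSpace n n₁ n₂ m m₁ m₂) δ,
      zhat η ∈ Metric.closedBall zs ε ∧
      η - (Φ zs + fderiv ℝ Φ zs (zhat η - zs)) ∈ normalCone K (zhat η) ∧
      ∀ z ∈ Metric.closedBall zs ε,
        η - (Φ zs + fderiv ℝ Φ zs (z - zs)) ∈ normalCone K z → z = zhat η) ∧
    ∃ L : NNReal, LipschitzOnWith L zhat (Metric.closedBall 0 δ)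

/-- `Φ` is a locally Lipschitz homeomorphism near `z`. -/
def LocLipHomeo {E : Type*} [NormedAddCommGroup E] (Φ : E → E) (z : E) : Prop :=
  ∃ U ∈ nhds z, ∃ V ∈ nhds (Φ z), ∃ Ψ : E → E,
    Φ '' U = V ∧ Set.MapsTo Ψ V U ∧
    (∀ a ∈ U, Ψ (Φ a) = a) ∧ (∀ b ∈ V, Φ (Ψ b) = b) ∧
    (∃ L₁ : NNReal, LipschitzOnWith L₁ Φ U) ∧ ∃ L₂ : NNReal, LipschitzOnWith L₂ Ψ V

/-- B-subdifferential of a map between normed spaces. -/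
def Bsubdiff {E F : Type*} [NormedAddCommGroup E] [NormedSpace ℝ E]
    [NormedAddCommGroup F] [NormedSpace ℝ F] (Φ : E → F) (z : E) : Set (E →L[ℝ] F) :=
  {V | ∃ zk : ℕ → E, (∀ k, DifferentiableAt ℝ Φ (zk k)) ∧
    Filter.Tendsto zk Filter.atTop (nhds z) ∧
    Filter.Tendsto (fun k => fderiv ℝ Φ (zk k)) Filter.atTop (nhds V)}

/-- Clarke subdifferential: convex hull of the B-subdifferential. -/
def ClarkeSubdiff {E F : Type*} [NormedAddCommGroup E] [NormedSpace ℝ E]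
    [NormedAddCommGroup F] [NormedSpace ℝ F] (Φ : E → F) (z : E) : Set (E →L[ℝ] F) :=
  convexHull ℝ (Bsubdiff Φ z)

lemma kmat_isUnit {n m m₁ m₂ : ℕ}
    (f : Vec n → Vec m → ℝ) (h : Vec n → Vec m → Vec m₁) (g : Vec n → Vec m → Vec m₂)
    (x : Vec n) (y : Vec m) (μ : Vec m₁) (lam : Vec m₂)
    (hfd : DifferentiableAt ℝ (fun z => f x z) y)
    (hhd : ∀ j, DifferentiableAt ℝ (fun z => h x z j) y)
    (hgd : ∀ i, DifferentiableAt ℝ (fun z => g x z i) y)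
    (hJU : InnerJU f h g x y μ lam) :
    IsUnit (Kmat f h g (activeSet g x y) x y μ lam) := by
  obtain ⟨⟨hstat, hfeas, hlam, hgle, hcompl⟩, hlicq, hstrict, hsosc⟩ := hJU
  set α : Finset (Fin m₂) := activeSet g x y with hαdef
  set A : Matrix (Fin m) (Fin m) ℝ := hessYY f h g x y μ lam with hA
  set Jh : Matrix (Fin m₁) (Fin m) ℝ := jac (h x) y with hJh
  set Jg : Matrix (Fin m₂) (Fin m) ℝ := jac (g x) y with hJg
  set B : Matrix (Fin m₁ ⊕ ↥α) (Fin m) ℝ :=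
    Matrix.fromRows Jh (-(Jg.submatrix (fun a : ↥α => (a : Fin m₂)) id)) with hB
  have hKeq : Kmat f h g α x y μ lam = Matrix.fromBlocks A Bᵀ B 0 := rfl
  rw [Matrix.isUnit_iff_isUnit_det, isUnit_iff_ne_zero]
  intro hdet
  obtain ⟨v, hv0, hKv⟩ := Matrix.exists_mulVec_eq_zero_iff.mpr hdet
  rw [hKeq, Matrix.fromBlocks_mulVec] at hKv
  set d : Vec m := v ∘ Sum.inl with hd
  have E1 : A *ᵥ d + Bᵀ *ᵥ (v ∘ Sum.inr) = 0 := funext fun j => congrFun hKv (Sum.inl j)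
  have E2 : B *ᵥ d = 0 := by
    funext j
    have := congrFun hKv (Sum.inr j)
    simpa [Matrix.zero_mulVec] using this
  have E2h : Jh *ᵥ d = 0 := by
    funext j
    have := congrFun E2 (Sum.inl j)
    simpa [hB, Matrix.fromRows_mulVec] using this
  have E2g : ∀ i : Fin m₂, g x y i = 0 → (Jg *ᵥ d) i = 0 := by
    intro i hi
    have hiα : i ∈ α := by simp [hαdef, activeSet, hi]
    have h2 : (-(Jg.submatrix (fun a : ↥α => (a : Fin m₂)) id) *ᵥ d) ⟨i, hiα⟩ = 0 := by
      have := congrFun E2 (Sum.inr ⟨i, hiα⟩)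
      simpa [hB, Matrix.fromRows_mulVec] using this
    rw [Matrix.neg_mulVec] at h2
    have h3 : (Jg.submatrix (fun a : ↥α => (a : Fin m₂)) id *ᵥ d) ⟨i, hiα⟩ = 0 :=
      neg_eq_zero.mp h2
    exact h3
  -- expand the gradient of the Lagrangian
  have hL : HasFDerivAt (fun z => Lag f h g x z μ lam)
      (fderiv ℝ (fun z => f x z) y + (∑ j', μ j' • fderiv ℝ (fun z => h x z j') y)
        - ∑ i, lam i • fderiv ℝ (fun z => g x z i) y) y := by
    have h1 : HasFDerivAt (fun z => ∑ j', μ j' * h x z j')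
        (∑ j', μ j' • fderiv ℝ (fun z => h x z j') y) y :=
      HasFDerivAt.fun_sum fun j' _ => ((hhd j').hasFDerivAt).const_mul (μ j')
    have h2 : HasFDerivAt (fun z => ∑ i, lam i * g x z i)
        (∑ i, lam i • fderiv ℝ (fun z => g x z i) y) y :=
      HasFDerivAt.fun_sum fun i _ => ((hgd i).hasFDerivAt).const_mul (lam i)
    exact (hfd.hasFDerivAt.add h1).sub h2
  have hstat' : ∀ j, grad (f x) y j
      + (∑ j', μ j' * grad (fun z => h x z j') y j)
      - ∑ i, lam i * grad (fun z => g x z i) y j = 0 := by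
    intro j
    have h0 : gradY f h g x y μ lam j = 0 := congrFun hstat j
    rw [gradY, grad] at h0
    rw [hL.fderiv] at h0
    simpa [ContinuousLinearMap.sum_apply, grad] using h0
  have hgradh : ∀ j', grad (fun z => h x z j') y ⬝ᵥ d = 0 := fun j' => congrFun E2h j'
  have hgradg : ∀ i, lam i * (grad (fun z => g x z i) y ⬝ᵥ d) = 0 := by
    intro i
    by_cases hi : g x y i = 0
    · have hz : grad (fun z => g x z i) y ⬝ᵥ d = 0 := E2g i hi
      rw [hz, mul_zero]
    · have hli : lam i = 0 := by
        rcases mul_eq_zero.mp (hcompl i) with h' | h'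
        · exact h'
        · exact absurd h' hi
      rw [hli, zero_mul]
  have hfd0 : grad (f x) y ⬝ᵥ d = 0 := by
    have hrw : ∀ j, grad (f x) y j = (∑ i, lam i * grad (fun z => g x z i) y j)
        - ∑ j', μ j' * grad (fun z => h x z j') y j := by
      intro j; have := hstat' j; linarith
    have e1 : ∑ j, (∑ i, lam i * grad (fun z => g x z i) y j) * d j
        = ∑ i, lam i * (grad (fun z => g x z i) y ⬝ᵥ d) := by
      simp only [dotProduct, Finset.sum_mul, Finset.mul_sum, mul_assoc]
      exact Finset.sum_comm
    have e2 : ∑ j, (∑ j', μ j' * grad (fun z => h x z j') y j) * d j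
        = ∑ j', μ j' * (grad (fun z => h x z j') y ⬝ᵥ d) := by
      simp only [dotProduct, Finset.sum_mul, Finset.mul_sum, mul_assoc]
      exact Finset.sum_comm
    calc grad (f x) y ⬝ᵥ d
        = ∑ j, ((∑ i, lam i * grad (fun z => g x z i) y j)
            - ∑ j', μ j' * grad (fun z => h x z j') y j) * d j :=
          Finset.sum_congr rfl fun j _ => by rw [hrw j]
      _ = (∑ i, lam i * (grad (fun z => g x z i) y ⬝ᵥ d))
          - ∑ j', μ j' * (grad (fun z => h x z j') y ⬝ᵥ d) := by
          simp only [sub_mul, Finset.sum_sub_distrib, e1, e2]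
      _ = 0 := by simp [hgradg, hgradh]
  have hdcone : d ∈ innerCone f h g x y :=
    ⟨E2h, fun i hi => le_of_eq (E2g i hi), le_of_eq hfd0⟩
  have hAd : d ⬝ᵥ A *ᵥ d = 0 := by
    have h1 : d ⬝ᵥ (A *ᵥ d + Bᵀ *ᵥ (v ∘ Sum.inr)) = d ⬝ᵥ (0 : Vec m) := by rw [E1]
    rw [dotProduct_add, dotProduct_zero] at h1
    have h2 : d ⬝ᵥ (Bᵀ *ᵥ (v ∘ Sum.inr)) = 0 := by
      rw [Matrix.dotProduct_mulVec, Matrix.vecMul_transpose, E2, zero_dotProduct]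
    linarith
  have hd0 : d = 0 := by
    by_contra hdne
    exact absurd hAd (ne_of_lt (hsosc d hdcone hdne))
  have E1' : Bᵀ *ᵥ (v ∘ Sum.inr) = 0 := by
    rw [hd0, Matrix.mulVec_zero, zero_add] at E1; exact E1
  set w : Vec m₁ := fun j => v (Sum.inr (Sum.inl j)) with hw
  set t : ↥α → ℝ := fun i => v (Sum.inr (Sum.inr i)) with ht
  have hvr : (v ∘ Sum.inr) = Sum.elim w t := by
    funext k; cases k <;> rfl
  rw [hB, hvr, Matrix.transpose_fromRows, Matrix.fromCols_mulVec_sumElim] at E1'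
  have he : ∀ i : {i : Fin m₂ // g x y i = 0}, (i : Fin m₂) ∈ α := fun i => by
    simp [hαdef, activeSet, i.2]
  have hgh : ∀ j, grad (fun z => h x z j) y = Jh j := fun j => rfl
  have hgg : ∀ i, grad (fun z => g x z i) y = Jg i := fun i => rfl
  set c : Fin m₁ ⊕ {i : Fin m₂ // g x y i = 0} → ℝ :=
    Sum.elim w (fun i => - t ⟨i.1, he i⟩) with hc
  have hsum : ∑ k, c k • (Sum.elim (fun j : Fin m₁ => grad (fun z => h x z j) y)
      (fun i : {i : Fin m₂ // g x y i = 0} => grad (fun z => g x z i.1) y)) k = 0 := by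
    funext l
    have hEl := congrFun E1' l
    simp only [Pi.add_apply, Pi.zero_apply, Matrix.mulVec, dotProduct,
      Matrix.transpose_apply, Matrix.neg_apply, Matrix.submatrix_apply, id] at hEl
    rw [Finset.sum_apply, Fintype.sum_sum_type]
    simp only [hc, Sum.elim_inl, Sum.elim_inr, Pi.smul_apply, smul_eq_mul, hgh, hgg,
      Pi.zero_apply]
    have hswap : ∑ i : {i : Fin m₂ // g x y i = 0}, (- t ⟨i.1, he i⟩) * Jg i.1 l
        = ∑ a : ↥α, (- t a) * Jg (a : Fin m₂) l :=
      Fintype.sum_equiv (Equiv.subtypeEquivRight (fun i => by simp [hαdef, activeSet]))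
        _ _ (fun i => rfl)
    rw [hswap]
    have : ∑ j, Jh j l * w j + ∑ a : ↥α, -Jg (a : Fin m₂) l * t a = 0 := hEl
    calc ∑ j, w j * Jh j l + ∑ a : ↥α, (- t a) * Jg (a : Fin m₂) l
        = ∑ j, Jh j l * w j + ∑ a : ↥α, -Jg (a : Fin m₂) l * t a := by
          congr 1
          · exact Finset.sum_congr rfl fun j _ => mul_comm _ _
          · exact Finset.sum_congr rfl fun a _ => by ring
      _ = 0 := this
  have hall := Fintype.linearIndependent_iff.mp hlicq c hsum
  have hw0 : ∀ j, w j = 0 := fun j => hall (Sum.inl j)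
  have ht0 : ∀ a : ↥α, t a = 0 := by
    intro a
    have ha : g x y (a : Fin m₂) = 0 := by
      have h' : (a : Fin m₂) ∈ Finset.univ.filter (fun i => g x y i = 0) := a.2
      exact (Finset.mem_filter.mp h').2
    have h0 := hall (Sum.inr ⟨(a : Fin m₂), ha⟩)
    simp only [hc, Sum.elim_inr, neg_eq_zero] at h0
    exact h0
  apply hv0
  funext k
  rcases k with j | k
  · exact congrFun hd0 j
  rcases k with j | a
  · exact hw0 j
  · exact ht0 a


/-- Lemma 2.2. Under the Jacobian uniqueness conditions of `(P_{x*})`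
at `(y*,μ*,λ*)` and with the implicit mapping `(y(·),μ(·),λ(·))` from the
implicit-function lemma, the matrix `K_α(x*)` is nonsingular, and `K_α(x)` is
nonsingular for all `x` in a small closed ball around `x*`. -/
theorem stmt_1 {n m m₁ m₂ : ℕ}
    (f : Vec n → Vec m → ℝ) (h : Vec n → Vec m → Vec m₁) (g : Vec n → Vec m → Vec m₂)
    (xs : Vec n) (ys : Vec m) (μs : Vec m₁) (lams : Vec m₂)
    (hf : ContDiffAt ℝ 2 (fun p : Vec n × Vec m => f p.1 p.2) (xs, ys))
    (hh : ContDiffAt ℝ 2 (fun p : Vec n × Vec m => h p.1 p.2) (xs, ys))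
    (hg : ContDiffAt ℝ 2 (fun p : Vec n × Vec m => g p.1 p.2) (xs, ys))
    (hJU : InnerJU f h g xs ys μs lams)
    -- the implicit mapping from the implicit-function lemma
    (δ' : ℝ) (hδ' : 0 < δ')
    (Y : Vec n → Vec m) (M : Vec n → Vec m₁) (Lam : Vec n → Vec m₂)
    (hYx : Y xs = ys) (hMx : M xs = μs) (hLx : Lam xs = lams)
    (hYc : ContDiffOn ℝ 2 Y (Metric.closedBall xs δ'))
    (hMc : ContDiffOn ℝ 2 M (Metric.closedBall xs δ'))
    (hLc : ContDiffOn ℝ 2 Lam (Metric.closedBall xs δ'))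
    (hJUx : ∀ x ∈ Metric.closedBall xs δ', InnerJU f h g x (Y x) (M x) (Lam x))
    (hact : ∀ x ∈ Metric.closedBall xs δ', ∀ i,
      (g xs ys i = 0 → g x (Y x) i = 0 ∧ 0 < Lam x i) ∧
      (g xs ys i ≠ 0 → g x (Y x) i < 0 ∧ Lam x i = 0)) :
    IsUnit (Kmat f h g (activeSet g xs ys) xs ys μs lams) ∧
      ∃ δ₀ > (0:ℝ), δ₀ ≤ δ' ∧ ∀ x ∈ Metric.closedBall xs δ₀,
        IsUnit (Kmat f h g (activeSet g xs ys) x (Y x) (M x) (Lam x)) := by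
  have hsliceF : ∀ (x' : Vec n) (y' : Vec m),
      ContDiffAt ℝ 2 (fun p : Vec n × Vec m => f p.1 p.2) (x', y') →
      DifferentiableAt ℝ (fun z => f x' z) y' := by
    intro x' y' hc
    have hD : DifferentiableAt ℝ (fun p : Vec n × Vec m => f p.1 p.2) (x', y') :=
      hc.differentiableAt two_ne_zero
    exact hD.comp y' ((differentiableAt_const x').prodMk differentiableAt_id)
  have hsliceH : ∀ (x' : Vec n) (y' : Vec m),
      ContDiffAt ℝ 2 (fun p : Vec n × Vec m => h p.1 p.2) (x', y') →
      ∀ j, DifferentiableAt ℝ (fun z => h x' z j) y' := by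
    intro x' y' hc j
    have hD : DifferentiableAt ℝ (fun z => h x' z) y' :=
      (hc.differentiableAt two_ne_zero).comp y'
        ((differentiableAt_const x').prodMk differentiableAt_id)
    exact differentiableAt_pi.mp hD j
  have hsliceG : ∀ (x' : Vec n) (y' : Vec m),
      ContDiffAt ℝ 2 (fun p : Vec n × Vec m => g p.1 p.2) (x', y') →
      ∀ i, DifferentiableAt ℝ (fun z => g x' z i) y' := by
    intro x' y' hc i
    have hD : DifferentiableAt ℝ (fun z => g x' z) y' :=
      (hc.differentiableAt two_ne_zero).comp y'
        ((differentiableAt_const x').prodMk differentiableAt_id)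
    exact differentiableAt_pi.mp hD i
  constructor
  · exact kmat_isUnit f h g xs ys μs lams (hsliceF xs ys hf) (hsliceH xs ys hh)
      (hsliceG xs ys hg) hJU
  · have h2top : (2 : WithTop ℕ∞) ≠ (⊤ : ℕ∞) := by
      norm_num
    have hev : ∀ᶠ p : Vec n × Vec m in nhds (xs, ys),
        ContDiffAt ℝ 2 (fun p : Vec n × Vec m => f p.1 p.2) p ∧
        ContDiffAt ℝ 2 (fun p : Vec n × Vec m => h p.1 p.2) p ∧
        ContDiffAt ℝ 2 (fun p : Vec n × Vec m => g p.1 p.2) p := by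
      filter_upwards [hf.eventually h2top, hh.eventually h2top, hg.eventually h2top]
        with p h1 h2 h3
      exact ⟨h1, h2, h3⟩
    have hYcont : ContinuousAt Y xs := by
      have h1 : ContinuousWithinAt Y (Metric.closedBall xs δ') xs :=
        hYc.continuousOn xs (Metric.mem_closedBall_self hδ'.le)
      exact h1.continuousAt (Metric.closedBall_mem_nhds xs hδ')
    have hφ : ContinuousAt (fun x => ((x, Y x) : Vec n × Vec m)) xs :=
      continuousAt_id.prodMk hYcont
    have hmem : (fun x => ((x, Y x) : Vec n × Vec m)) ⁻¹'
        {p : Vec n × Vec m | ContDiffAt ℝ 2 (fun p : Vec n × Vec m => f p.1 p.2) p ∧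
          ContDiffAt ℝ 2 (fun p : Vec n × Vec m => h p.1 p.2) p ∧
          ContDiffAt ℝ 2 (fun p : Vec n × Vec m => g p.1 p.2) p} ∈ nhds xs := by
      apply hφ.preimage_mem_nhds
      rw [hYx]
      exact hev
    have hball : Metric.closedBall xs δ' ∈ nhds xs := Metric.closedBall_mem_nhds xs hδ'
    obtain ⟨δ₀, hδ₀pos, hδ₀sub⟩ :=
      Metric.nhds_basis_closedBall.mem_iff.mp (Filter.inter_mem hmem hball)
    refine ⟨min δ₀ δ', lt_min hδ₀pos hδ', min_le_right _ _, ?_⟩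
    intro x hx
    have hx' : x ∈ Metric.closedBall xs δ₀ :=
      Metric.closedBall_subset_closedBall (min_le_left _ _) hx
    obtain ⟨⟨hcf, hch, hcg⟩, hxδ'⟩ := hδ₀sub hx'
    have hU := kmat_isUnit f h g x (Y x) (M x) (Lam x) (hsliceF x (Y x) hcf)
      (hsliceH x (Y x) hch) (hsliceG x (Y x) hcg) (hJUx x hxδ')
    have hαeq : activeSet g x (Y x) = activeSet g xs ys := by
      ext i
      simp only [activeSet, Finset.mem_filter, Finset.mem_univ, true_and]
      constructor
      · intro hi
        by_contra hne
        exact absurd hi (ne_of_lt ((hact x hxδ' i).2 hne).1)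
      · intro hi
        exact ((hact x hxδ' i).1 hi).1
    rw [hαeq] at hU
    exact hU

end
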